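/- Let U be a non-decreasing right-continuous function on ℝ with U(x) = 0 for all x < 0, and suppose U is regularly varying of index ρ > 0 at ∞. Then for every r > 0, −log ∫_{(x,∞)} e^{−ry} dU(y) ~ r x as x → ∞. -/

import Mathlib

open Filter MeasureTheory Real Set

/-- `l` is slowly varying at `∞` (`l ∈ R₀`). -/
def SlowlyVarying (l : ℝ → ℝ) : Prop :=
  (∀ᶠ x in atTop, 0 < l x) ∧
  ∀ c : ℝ, 0 < c → Tendsto (fun x => l (c * x) / l x) atTop (nhds 1)

/-- `f` is regularly varying of index `α` at `∞` (`f ∈ R_α`): `f x = x^α l(x)` for a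
slowly varying `l`. -/
def RegularlyVarying (α : ℝ) (f : ℝ → ℝ) : Prop :=
  ∃ l : ℝ → ℝ, SlowlyVarying l ∧ ∀ᶠ x in atTop, f x = x ^ α * l x

/-- Let `U` be non-decreasing right-continuous, vanishing on `(-∞,0)`,
and regularly varying of index `ρ > 0` at `∞`. Then for every `r > 0`,
`-log ∫_{(x,∞)} e^{-r y} dU(y) ~ r x` as `x → ∞`. -/
lemma rv_eventually_pos {ρ : ℝ} {U : ℝ → ℝ} (hreg : RegularlyVarying ρ U) :
    ∀ᶠ x in atTop, 0 < U x := by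
  obtain ⟨l, ⟨hlpos, _⟩, hUeq⟩ := hreg
  filter_upwards [hlpos, hUeq, eventually_gt_atTop 0] with x h1 h2 h3
  rw [h2]
  positivity

lemma rv_ratio_tendsto {ρ : ℝ} {U : ℝ → ℝ} (hreg : RegularlyVarying ρ U)
    (c : ℝ) (hc : 0 < c) :
    Tendsto (fun x => U (c * x) / U x) atTop (nhds (c ^ ρ)) := by
  obtain ⟨l, ⟨hlpos, hlslow⟩, hUeq⟩ := hreg
  have hmul : Tendsto (fun x : ℝ => c * x) atTop atTop :=
    Tendsto.const_mul_atTop hc tendsto_id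
  have h1 : Tendsto (fun x => c ^ ρ * (l (c * x) / l x)) atTop (nhds (c ^ ρ * 1)) :=
    (tendsto_const_nhds).mul (hlslow c hc)
  rw [mul_one] at h1
  refine h1.congr' ?_
  filter_upwards [hlpos, hUeq, hmul.eventually hlpos, hmul.eventually hUeq,
    eventually_gt_atTop 0] with x hl hU hlc hUc hx
  rw [hU, hUc, Real.mul_rpow hc.le hx.le]
  have hxρ : (0:ℝ) < x ^ ρ := Real.rpow_pos_of_pos hx ρ
  field_simp

lemma poly_bound (U : StieltjesFunction ℝ) {ρ : ℝ}
    (hreg : RegularlyVarying ρ (U : ℝ → ℝ)) :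
    ∃ X C : ℝ, ∃ K : ℕ, 1 ≤ X ∧ 0 < C ∧ 0 < U X ∧ ∀ y, X ≤ y → U y ≤ C * y ^ K := by
  set M : ℝ := (2:ℝ) ^ ρ + 1 with hM
  have hM1 : 1 < M := by
    have : (0:ℝ) < (2:ℝ) ^ ρ := Real.rpow_pos_of_pos two_pos ρ
    simp [hM]; linarith
  have hM0 : 0 ≤ M := by linarith
  -- eventual doubling bound
  have hdouble : ∀ᶠ x in atTop, U (2 * x) ≤ M * U x := by
    have h := (rv_ratio_tendsto hreg 2 two_pos).eventually
      (eventually_lt_nhds (by simp [hM] : (2:ℝ)^ρ < M))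
    filter_upwards [h, rv_eventually_pos hreg] with x h1 h2
    rw [div_lt_iff₀ h2] at h1
    linarith
  obtain ⟨X, hX⟩ := ((hdouble.and (rv_eventually_pos hreg)).and
    (eventually_ge_atTop (1:ℝ))).exists_forall_of_atTop
  have hX1 : 1 ≤ X := (hX X le_rfl).2
  have hUX : 0 < U X := (hX X le_rfl).1.2
  have hXpos : 0 < X := lt_of_lt_of_le one_pos hX1
  obtain ⟨K, hK⟩ := pow_unbounded_of_one_lt M one_lt_two
  -- U (2^n X) ≤ M^n U X
  have hQ : ∀ n : ℕ, U (2 ^ n * X) ≤ M ^ n * U X := by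
    intro n
    induction n with
    | zero => simp
    | succ n ih =>
      have hXle : X ≤ 2 ^ n * X := le_mul_of_one_le_left hXpos.le (one_le_pow₀ one_le_two)
      have h2 : U (2 * (2 ^ n * X)) ≤ M * U (2 ^ n * X) := (hX _ hXle).1.1
      calc U (2 ^ (n+1) * X) = U (2 * (2 ^ n * X)) := by ring_nf
        _ ≤ M * U (2 ^ n * X) := h2
        _ ≤ M * (M ^ n * U X) := by
            exact mul_le_mul_of_nonneg_left ih hM0
        _ = M ^ (n+1) * U X := by ring
  refine ⟨X, U X * (2 / X) ^ K, K, hX1, by positivity, hUX, ?_⟩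
  intro y hy
  have hy0 : 0 < y := lt_of_lt_of_le hXpos hy
  -- find minimal n with y ≤ 2^n X
  have hex : ∃ n : ℕ, y ≤ 2 ^ n * X := by
    obtain ⟨n, hn⟩ := pow_unbounded_of_one_lt (y / X) (one_lt_two (α := ℝ))
    exact ⟨n, by rw [div_lt_iff₀ hXpos] at hn; linarith⟩
  classical
  set n := Nat.find hex with hn
  have hyn : y ≤ 2 ^ n * X := Nat.find_spec hex
  have h2n : (2:ℝ) ^ n ≤ 2 * y / X := by
    rcases Nat.eq_zero_or_pos n with h0 | hpos
    · rw [h0]; rw [le_div_iff₀ hXpos]; simp; nlinarith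
    · obtain ⟨m, hm⟩ := Nat.exists_eq_succ_of_ne_zero hpos.ne'
      have hmin := Nat.find_min hex (m := m) (by omega)
      push_neg at hmin
      rw [le_div_iff₀ hXpos, hm]
      calc (2:ℝ) ^ (m+1) * X = 2 * (2 ^ m * X) := by ring
        _ ≤ 2 * y := by nlinarith
  have hUy : U y ≤ M ^ n * U X := le_trans (U.mono hyn) (hQ n)
  have hMn : M ^ n ≤ (2 * y / X) ^ K := by
    calc M ^ n ≤ ((2:ℝ) ^ K) ^ n := pow_le_pow_left₀ hM0 hK.le n
      _ = ((2:ℝ) ^ n) ^ K := by rw [← pow_mul, ← pow_mul, Nat.mul_comm]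
      _ ≤ (2 * y / X) ^ K := by
          apply pow_le_pow_left₀ (by positivity) h2n
  calc U y ≤ M ^ n * U X := hUy
    _ ≤ (2 * y / X) ^ K * U X := mul_le_mul_of_nonneg_right hMn hUX.le
    _ = U X * (2 / X) ^ K * y ^ K := by field_simp; ring

lemma tail_lt_top (U : StieltjesFunction ℝ) (hUnn : ∀ y, 0 ≤ U y)
    {C X : ℝ} {K : ℕ} (hX : 1 ≤ X) (hC : 0 < C)
    (hpoly : ∀ y, X ≤ y → U y ≤ C * y ^ K)
    {s : ℝ} (hs : 0 < s) :
    ∫⁻ y in Set.Ioi (0:ℝ), ENNReal.ofReal (Real.exp (-(s*y))) ∂U.measure < ⊤ := by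
  have hXpos : 0 < X := lt_of_lt_of_le one_pos hX
  -- bound on U for all y ≥ 0
  have hU' : ∀ y : ℝ, 0 ≤ y → U y ≤ C * (1 + X) ^ K * (y + 1) ^ K := by
    intro y hy
    have h1 : U y ≤ U (y + X) := U.mono (by linarith)
    have h2 : U (y + X) ≤ C * (y + X) ^ K := hpoly _ (by linarith)
    have h3 : (y + X) ^ K ≤ ((y + 1) * (1 + X)) ^ K := by
      apply pow_le_pow_left₀ (by linarith) (by nlinarith)
    calc U y ≤ C * (y + X) ^ K := le_trans h1 h2
      _ ≤ C * ((y + 1) * (1 + X)) ^ K := by nlinarith [pow_nonneg (by linarith : (0:ℝ) ≤ y + X) K]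
      _ = C * (1 + X) ^ K * (y + 1) ^ K := by rw [mul_pow]; ring
  set C₂ : ℝ := C * (1 + X) ^ K with hC₂
  have hC₂pos : 0 < C₂ := by positivity
  -- decompose Ioi 0 into Ioc k (k+1)
  have hdecomp : Set.Ioi (0:ℝ) = ⋃ k : ℕ, Set.Ioc (k:ℝ) (k+1) := by
    ext y
    simp only [Set.mem_Ioi, Set.mem_iUnion, Set.mem_Ioc]
    constructor
    · intro hy
      refine ⟨⌈y⌉₊ - 1, ?_, ?_⟩
      · have h1 : 1 ≤ ⌈y⌉₊ := Nat.one_le_ceil_iff.2 hy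
        have h2 : (⌈y⌉₊ : ℝ) < y + 1 := Nat.ceil_lt_add_one hy.le
        push_cast [Nat.cast_sub h1]
        linarith
      · have h1 : 1 ≤ ⌈y⌉₊ := Nat.one_le_ceil_iff.2 hy
        have h2 : y ≤ (⌈y⌉₊ : ℝ) := Nat.le_ceil y
        push_cast [Nat.cast_sub h1]
        linarith
    · rintro ⟨k, h1, _⟩
      exact lt_of_le_of_lt (Nat.cast_nonneg k) h1
  have hdisj : Pairwise (Function.onFun Disjoint fun k : ℕ => Set.Ioc (k:ℝ) (k+1)) := by
    intro i j hij
    simp only [Function.onFun]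
    rw [Set.Ioc_disjoint_Ioc]
    rcases hij.lt_or_gt with h | h
    · have : (i:ℝ) + 1 ≤ (j:ℝ) := by exact_mod_cast Nat.succ_le_of_lt h
      calc min ((i:ℝ)+1) ((j:ℝ)+1) = (i:ℝ)+1 := min_eq_left (by linarith)
        _ ≤ max (i:ℝ) (j:ℝ) := le_trans this (le_max_right _ _)
    · have : (j:ℝ) + 1 ≤ (i:ℝ) := by exact_mod_cast Nat.succ_le_of_lt h
      calc min ((i:ℝ)+1) ((j:ℝ)+1) = (j:ℝ)+1 := min_eq_right (by linarith)
        _ ≤ max (i:ℝ) (j:ℝ) := le_trans this (le_max_left _ _)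
  rw [hdecomp, MeasureTheory.lintegral_iUnion (fun k => measurableSet_Ioc) hdisj]
  -- bound each term
  have hterm : ∀ k : ℕ, (∫⁻ y in Set.Ioc (k:ℝ) (k+1), ENNReal.ofReal (Real.exp (-(s*y))) ∂U.measure)
      ≤ ENNReal.ofReal (Real.exp (-s) ^ k * (C₂ * (k + 2) ^ K)) := by
    intro k
    have h1 : (∫⁻ y in Set.Ioc (k:ℝ) (k+1), ENNReal.ofReal (Real.exp (-(s*y))) ∂U.measure)
        ≤ ∫⁻ _ in Set.Ioc (k:ℝ) (k+1), ENNReal.ofReal (Real.exp (-(s*k))) ∂U.measure := by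
      apply MeasureTheory.setLIntegral_mono measurable_const
      intro y hy
      apply ENNReal.ofReal_le_ofReal
      apply Real.exp_le_exp.2
      have : (k:ℝ) ≤ y := hy.1.le
      nlinarith
    rw [MeasureTheory.setLIntegral_const, StieltjesFunction.measure_Ioc] at h1
    refine le_trans h1 ?_
    rw [← ENNReal.ofReal_mul (Real.exp_nonneg _)]
    apply ENNReal.ofReal_le_ofReal
    have hUk : U ((k:ℝ)+1) - U k ≤ C₂ * ((k:ℝ) + 2) ^ K := by
      have h0 := hUnn (k:ℝ)
      have h1' := hU' ((k:ℝ)+1) (by positivity)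
      have he : ((k:ℝ)+1+1) = (k:ℝ)+2 := by ring
      rw [he] at h1'
      linarith
    have hexp : Real.exp (-(s*(k:ℝ))) = Real.exp (-s) ^ k := by
      rw [← Real.exp_nat_mul]; ring_nf
    rw [hexp]
    exact mul_le_mul_of_nonneg_left hUk (by positivity)
  -- summability
  have hsum : Summable (fun k : ℕ => Real.exp (-s) ^ k * (C₂ * ((k:ℝ) + 2) ^ K)) := by
    have hlt : ‖Real.exp (-s)‖ < 1 := by
      rw [Real.norm_eq_abs, abs_of_pos (Real.exp_pos _)]
      exact Real.exp_lt_one_iff.2 (by linarith)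
    have h1 : Summable (fun n : ℕ => (n:ℝ) ^ K * Real.exp (-s) ^ n) :=
      summable_pow_mul_geometric_of_norm_lt_one K hlt
    have h2 : Summable (fun n : ℕ => ((n:ℝ)+2) ^ K * Real.exp (-s) ^ (n+2)) := by
      have := (summable_nat_add_iff (f := fun n : ℕ => (n:ℝ) ^ K * Real.exp (-s) ^ n) 2).2 h1
      exact this.congr fun n => by push_cast; ring
    have h3 : Summable (fun n : ℕ => ((n:ℝ)+2) ^ K * Real.exp (-s) ^ n) := by
      have h4 := h2.mul_left ((Real.exp (-s))⁻¹ ^ 2)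
      refine h4.congr fun n => ?_
      have he : Real.exp (-s) ≠ 0 := (Real.exp_pos _).ne'
      rw [pow_add]
      field_simp
    exact (h3.mul_left C₂).congr fun n => by ring
  calc ∑' k : ℕ, (∫⁻ y in Set.Ioc (k:ℝ) (k+1), ENNReal.ofReal (Real.exp (-(s*y))) ∂U.measure)
      ≤ ∑' k : ℕ, ENNReal.ofReal (Real.exp (-s) ^ k * (C₂ * ((k:ℝ) + 2) ^ K)) :=
        ENNReal.tsum_le_tsum hterm
    _ = ENNReal.ofReal (∑' k : ℕ, Real.exp (-s) ^ k * (C₂ * ((k:ℝ) + 2) ^ K)) := by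
        rw [ENNReal.ofReal_tsum_of_nonneg (fun k => by positivity) hsum]
    _ < ⊤ := ENNReal.ofReal_lt_top

theorem neg_log_stieltjes_integral_of_regularlyVarying
    (U : StieltjesFunction ℝ) (hU0 : ∀ x < 0, U x = 0)
    (ρ : ℝ) (hρ : 0 < ρ) (hreg : RegularlyVarying ρ U) :
    ∀ r : ℝ, 0 < r →
      Tendsto (fun x =>
          -Real.log ((∫⁻ y in Set.Ioi x,
              ENNReal.ofReal (Real.exp (-(r * y))) ∂U.measure).toReal) / (r * x))
        atTop (nhds 1) := by
  intro r hr
  have hUnn : ∀ y, 0 ≤ U y := by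
    intro y
    rcases lt_or_ge y 0 with h | h
    · exact le_of_eq (hU0 y h).symm
    · have h1 := hU0 (-1) (by norm_num)
      calc (0:ℝ) = U (-1) := h1.symm
        _ ≤ U y := U.mono (by linarith)
  obtain ⟨X, C, K, hX1, hC, hUX, hpoly⟩ := poly_bound U hreg
  have hXpos : 0 < X := lt_of_lt_of_le one_pos hX1
  set I : ℝ → ENNReal := fun x => ∫⁻ y in Set.Ioi x,
      ENNReal.ofReal (Real.exp (-(r * y))) ∂U.measure with hI
  have hmeas : ∀ s : ℝ, Measurable fun y : ℝ => ENNReal.ofReal (Real.exp (-(s*y))) := by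
    intro s; fun_prop
  -- upper bound
  have hupper : ∀ δ : ℝ, 0 < δ → δ ≤ 1 → ∀ x : ℝ, 0 ≤ x →
      I x ≤ ENNReal.ofReal (Real.exp (-((1-δ)*r*x))) *
        (∫⁻ y in Set.Ioi (0:ℝ), ENNReal.ofReal (Real.exp (-(δ*r*y))) ∂U.measure) := by
    intro δ hδ hδ1 x hx
    have step1 : I x ≤ ∫⁻ y in Set.Ioi x,
        ENNReal.ofReal (Real.exp (-((1-δ)*r*x))) * ENNReal.ofReal (Real.exp (-(δ*r*y))) ∂U.measure := by
      apply MeasureTheory.setLIntegral_mono (by fun_prop)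
      intro y hy
      rw [← ENNReal.ofReal_mul (Real.exp_nonneg _), ← Real.exp_add]
      apply ENNReal.ofReal_le_ofReal
      apply Real.exp_le_exp.2
      have hxy : x ≤ y := (Set.mem_Ioi.1 hy).le
      nlinarith [mul_nonneg (mul_nonneg (by linarith : (0:ℝ) ≤ 1-δ) hr.le)
        (by linarith : (0:ℝ) ≤ y - x)]
    rw [MeasureTheory.lintegral_const_mul _ (hmeas (δ*r))] at step1
    refine le_trans step1 ?_
    exact mul_le_mul_right (MeasureTheory.lintegral_mono_set (Set.Ioi_subset_Ioi hx)) _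
  have hF : ∀ s : ℝ, 0 < s →
      (∫⁻ y in Set.Ioi (0:ℝ), ENNReal.ofReal (Real.exp (-(s*y))) ∂U.measure) < ⊤ :=
    fun s hs => tail_lt_top U hUnn hX1 hC hpoly hs
  have hIfin : ∀ x : ℝ, 0 ≤ x → I x ≠ ⊤ := by
    intro x hx
    refine ne_of_lt (lt_of_le_of_lt (hupper 1 one_pos le_rfl x hx) ?_)
    exact ENNReal.mul_lt_top ENNReal.ofReal_lt_top (by simpa using hF r hr)
  -- lower bound
  have hlower : ∀ δ : ℝ, 0 < δ → ∃ d : ℝ, 0 < d ∧ ∀ᶠ x in atTop,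
      ENNReal.ofReal (Real.exp (-((1+δ)*r*x)) * d) ≤ I x := by
    intro δ hδ
    have hc1 : (1:ℝ) < 1 + δ := by linarith
    have hρ1 : 1 < (1+δ) ^ ρ := Real.one_lt_rpow_iff_of_pos (by linarith) |>.2 (Or.inl ⟨hc1, hρ⟩)
    set m := (1 + (1+δ)^ρ)/2 with hm
    have hm1 : 1 < m := by rw [hm]; linarith
    have hmlt : m < (1+δ)^ρ := by rw [hm]; linarith
    have hev := (rv_ratio_tendsto hreg (1+δ) (by linarith)).eventually
      (eventually_gt_nhds hmlt)
    refine ⟨(m-1) * U X, by nlinarith, ?_⟩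
    filter_upwards [hev, eventually_ge_atTop X] with x h1 h2
    have hx0 : 0 < x := lt_of_lt_of_le hXpos h2
    have hUx : 0 < U x := lt_of_lt_of_le hUX (U.mono h2)
    have hgap : (m-1) * U X ≤ U ((1+δ)*x) - U x := by
      rw [lt_div_iff₀ hUx] at h1
      have hUXx : U X ≤ U x := U.mono h2
      nlinarith
    calc ENNReal.ofReal (Real.exp (-((1+δ)*r*x)) * ((m-1) * U X))
        ≤ ENNReal.ofReal (Real.exp (-((1+δ)*r*x)) * (U ((1+δ)*x) - U x)) := by
          apply ENNReal.ofReal_le_ofReal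
          exact mul_le_mul_of_nonneg_left hgap (Real.exp_nonneg _)
      _ = ENNReal.ofReal (Real.exp (-((1+δ)*r*x))) * ENNReal.ofReal (U ((1+δ)*x) - U x) :=
          ENNReal.ofReal_mul (Real.exp_nonneg _)
      _ = ∫⁻ _ in Set.Ioc x ((1+δ)*x), ENNReal.ofReal (Real.exp (-((1+δ)*r*x))) ∂U.measure := by
          rw [MeasureTheory.setLIntegral_const, StieltjesFunction.measure_Ioc]
      _ ≤ ∫⁻ y in Set.Ioc x ((1+δ)*x), ENNReal.ofReal (Real.exp (-(r*y))) ∂U.measure := by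
          apply MeasureTheory.setLIntegral_mono (hmeas r)
          intro y hy
          apply ENNReal.ofReal_le_ofReal
          apply Real.exp_le_exp.2
          have h3 : y ≤ (1+δ)*x := hy.2
          nlinarith
      _ ≤ I x := MeasureTheory.lintegral_mono_set Set.Ioc_subset_Ioi_self
  -- positivity of (I x).toReal eventually
  have hpos : ∀ᶠ x in atTop, 0 < (I x).toReal := by
    obtain ⟨d, hd, hev⟩ := hlower 1 one_pos
    filter_upwards [hev, eventually_ge_atTop (1:ℝ)] with x h1 h2
    have hfin := hIfin x (by linarith)
    have := (ENNReal.ofReal_le_iff_le_toReal hfin).1 h1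
    have he : 0 < Real.exp (-((1+1)*r*x)) * d := by positivity
    linarith
  rw [show (fun x => -Real.log ((I x).toReal) / (r * x)) =
      (fun x =>
          -Real.log ((∫⁻ y in Set.Ioi x,
              ENNReal.ofReal (Real.exp (-(r * y))) ∂U.measure).toReal) / (r * x)) from rfl] at *
  apply tendsto_order.2
  constructor
  · -- lower: ∀ a < 1
    intro a ha
    set δ : ℝ := min ((1-a)/2) 1 with hδdef
    have hδ0 : 0 < δ := lt_min (by linarith) one_pos
    have hδ1 : δ ≤ 1 := min_le_right _ _
    have hδa : δ ≤ (1-a)/2 := min_le_left _ _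
    set F : ENNReal := ∫⁻ y in Set.Ioi (0:ℝ), ENNReal.ofReal (Real.exp (-(δ*r*y))) ∂U.measure with hFdef
    have hFfin : F ≠ ⊤ := ne_of_lt (hF (δ*r) (by positivity))
    set Fr : ℝ := F.toReal with hFr
    have hdiv : Tendsto (fun x => Real.log Fr / (r*x)) atTop (nhds 0) :=
      Tendsto.div_atTop tendsto_const_nhds (Tendsto.const_mul_atTop hr tendsto_id)
    filter_upwards [hpos, eventually_ge_atTop (1:ℝ),
      hdiv.eventually (eventually_lt_nhds (by linarith : (0:ℝ) < (1-a)/2))] with x hIpos hx1 hlog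
    have hx0 : (0:ℝ) ≤ x := by linarith
    have hrx : 0 < r * x := by positivity
    have hfin := hIfin x hx0
    -- real upper bound
    have hub : (I x).toReal ≤ Real.exp (-((1-δ)*r*x)) * Fr := by
      have h1 := hupper δ hδ0 hδ1 x hx0
      have h2 := ENNReal.toReal_mono (by
        exact ENNReal.mul_ne_top ENNReal.ofReal_ne_top hFfin) h1
      rwa [ENNReal.toReal_mul, ENNReal.toReal_ofReal (Real.exp_nonneg _)] at h2
    have hFrpos : 0 < Fr := by
      by_contra h
      push_neg at h
      have : Real.exp (-((1-δ)*r*x)) * Fr ≤ 0 := by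
        have := Real.exp_nonneg (-((1-δ)*r*x)); nlinarith
      linarith
    have hlogle : Real.log ((I x).toReal) ≤ -((1-δ)*r*x) + Real.log Fr := by
      calc Real.log ((I x).toReal) ≤ Real.log (Real.exp (-((1-δ)*r*x)) * Fr) :=
            Real.log_le_log hIpos hub
        _ = -((1-δ)*r*x) + Real.log Fr := by
            rw [Real.log_mul (Real.exp_ne_zero _) hFrpos.ne', Real.log_exp]
    rw [lt_div_iff₀ hrx]
    rw [div_lt_iff₀ hrx] at hlog
    nlinarith
  · -- upper: ∀ b > 1
    intro b hb
    set δ : ℝ := (b-1)/2 with hδdef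
    have hδ0 : 0 < δ := by rw [hδdef]; linarith
    obtain ⟨d, hd, hev⟩ := hlower δ hδ0
    have hdiv : Tendsto (fun x => -Real.log d / (r*x)) atTop (nhds 0) :=
      Tendsto.div_atTop tendsto_const_nhds (Tendsto.const_mul_atTop hr tendsto_id)
    filter_upwards [hpos, hev, eventually_ge_atTop (1:ℝ),
      hdiv.eventually (eventually_lt_nhds hδ0)] with x hIpos hevx hx1 hlog
    have hx0 : (0:ℝ) ≤ x := by linarith
    have hrx : 0 < r * x := by positivity
    have hfin := hIfin x hx0
    have hlb : Real.exp (-((1+δ)*r*x)) * d ≤ (I x).toReal :=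
      (ENNReal.ofReal_le_iff_le_toReal hfin).1 hevx
    have hlogge : -((1+δ)*r*x) + Real.log d ≤ Real.log ((I x).toReal) := by
      calc -((1+δ)*r*x) + Real.log d = Real.log (Real.exp (-((1+δ)*r*x)) * d) := by
            rw [Real.log_mul (Real.exp_ne_zero _) hd.ne', Real.log_exp]
        _ ≤ Real.log ((I x).toReal) := Real.log_le_log (by positivity) hlb
    rw [div_lt_iff₀ hrx]
    rw [div_lt_iff₀ hrx] at hlog
    have hbδ : b = 1 + 2*δ := by rw [hδdef]; ring
    nlinarith
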